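/- The inclusion c₀^λ(F̂) ⊆ c^λ(F̂) is strict: every element of c₀^λ(F̂) lies in c^λ(F̂), and the sequence x with x_0 = 1 and x_n = f_{n+1}² (∑_{j=1}^{n} 1/(f_j f_{j+1}) + 1) for n ≥ 1 belongs to c^λ(F̂) but not to c₀^λ(F̂). -/

import Mathlib

open Filter Finset

noncomputable def fibR : ℕ → ℝ
  | 0 => 1
  | 1 => 1
  | (n + 2) => fibR (n + 1) + fibR n

noncomputable def Fhat (x : ℕ → ℝ) (n : ℕ) : ℝ :=
  fibR n / fibR (n + 1) * x n - fibR (n + 1) / fibR n * (if n = 0 then 0 else x (n - 1))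

noncomputable def Fbar (Λ : ℕ → ℝ) (x : ℕ → ℝ) (n : ℕ) : ℝ :=
  (1 / Λ n) * ∑ k ∈ Finset.range (n + 1),
    (Λ k - if k = 0 then 0 else Λ (k - 1)) *
      (fibR k / fibR (k + 1) * x k -
        fibR (k + 1) / fibR k * (if k = 0 then 0 else x (k - 1)))

lemma fibR_pos : ∀ n, 0 < fibR n := by
  intro n
  induction n using Nat.strong_induction_on with
  | _ n ih =>
    match n with
    | 0 => norm_num [fibR]
    | 1 => norm_num [fibR]
    | (m + 2) =>
      have h1 := ih (m + 1) (by omega)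
      have h2 := ih m (by omega)
      rw [fibR]; linarith

lemma key (x : ℕ → ℝ) (hx0 : x 0 = 1)
    (hx : ∀ n, 1 ≤ n → x n =
      fibR (n + 1) ^ 2 * (∑ j ∈ Finset.Icc 1 n, 1 / (fibR j * fibR (j + 1)) + 1)) :
    ∀ k, fibR k / fibR (k + 1) * x k -
        fibR (k + 1) / fibR k * (if k = 0 then 0 else x (k - 1)) = 1 := by
  intro k
  match k with
  | 0 => simp [hx0, fibR]
  | 1 =>
    rw [hx 1 le_rfl]
    simp [hx0, fibR]
    norm_num
  | (m + 2) =>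
    have h1 := hx (m + 2) (by omega)
    have h2 := hx (m + 1) (by omega)
    have hstep : ∑ j ∈ Finset.Icc 1 (m + 2), 1 / (fibR j * fibR (j + 1)) =
        (∑ j ∈ Finset.Icc 1 (m + 1), 1 / (fibR j * fibR (j + 1))) +
          1 / (fibR (m + 2) * fibR (m + 3)) := by
      rw [← Finset.sum_Icc_succ_top (by omega : 1 ≤ m + 2)]
    have hb := fibR_pos (m + 2)
    have hc := fibR_pos (m + 3)
    set S := ∑ j ∈ Finset.Icc 1 (m + 1), 1 / (fibR j * fibR (j + 1)) with hS
    simp only [if_neg (by omega : ¬ m + 2 = 0)]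
    have : m + 2 - 1 = m + 1 := by omega
    rw [this, h1, h2, hstep]
    field_simp
    ring

lemma tele (Λ : ℕ → ℝ) : ∀ n, ∑ k ∈ Finset.range (n + 1),
    (Λ k - if k = 0 then 0 else Λ (k - 1)) = Λ n := by
  intro n
  induction n with
  | zero => simp
  | succ m ih =>
    rw [Finset.sum_range_succ, ih]
    simp

theorem c0lambdaF_strict_subset_clambdaF (Λ : ℕ → ℝ) (hmono : StrictMono Λ)
    (hpos : ∀ k, 0 < Λ k) (hlim : Tendsto Λ atTop atTop) :
    (∀ x : ℕ → ℝ, Tendsto (Fbar Λ x) atTop (nhds 0) →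
        ∃ l : ℝ, Tendsto (Fbar Λ x) atTop (nhds l)) ∧
      (∀ x : ℕ → ℝ, x 0 = 1 →
        (∀ n, 1 ≤ n → x n =
          fibR (n + 1) ^ 2 * (∑ j ∈ Finset.Icc 1 n, 1 / (fibR j * fibR (j + 1)) + 1)) →
        (∃ l : ℝ, Tendsto (Fbar Λ x) atTop (nhds l)) ∧
          ¬ Tendsto (Fbar Λ x) atTop (nhds 0)) := by
  constructor
  · intro x h
    exact ⟨0, h⟩
  · intro x hx0 hx
    have hF : Fbar Λ x = fun _ => 1 := by
      funext n
      unfold Fbar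
      have : ∑ k ∈ Finset.range (n + 1),
          (Λ k - if k = 0 then 0 else Λ (k - 1)) *
            (fibR k / fibR (k + 1) * x k -
              fibR (k + 1) / fibR k * (if k = 0 then 0 else x (k - 1))) =
          ∑ k ∈ Finset.range (n + 1), (Λ k - if k = 0 then 0 else Λ (k - 1)) := by
        apply Finset.sum_congr rfl
        intro k _
        rw [key x hx0 hx k, mul_one]
      rw [this, tele]
      field_simp [(hpos n).ne']
    rw [hF]
    constructor
    · exact ⟨1, tendsto_const_nhds⟩
    · intro h
      have := tendsto_nhds_unique h tendsto_const_nhds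
      norm_num at this
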